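/- Universal property: let R be a multiplicatively cancellative commutative semiring and ρ : Sub_≥(ℕ × ℕ) → R a semiring homomorphism with ρ⁻¹({0}) = {∅}. Then ρ factors uniquely through the convex hull map γ: there exists a unique semiring homomorphism ρ' : Conv_≥(ℕ × ℕ) → R with ρ = ρ' ∘ γ. In particular, ρ(E) depends only on the convex hull γ(E). -/

import Mathlib

open Pointwise

/-- The positive quadrant in ℝ². -/
def Quad : Set (ℝ × ℝ) := {p : ℝ × ℝ | 0 ≤ p.1 ∧ 0 ≤ p.2}

/-- Membership in Conv_≥(ℕ × ℕ). -/
def IsConvGE (C : Set (ℝ × ℝ)) : Prop :=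
  C = ∅ ∨ (C ⊆ Quad ∧ IsClosed C ∧ Convex ℝ C ∧ C + Quad = C ∧
    Set.extremePoints ℝ C ⊆ {p : ℝ × ℝ | ∃ a b : ℕ, p = ((a : ℝ), (b : ℝ))})

/-- The convex hull map: `gam E` is the closed convex hull of E + Q in ℝ². -/
noncomputable def gam (E : Set (ℕ × ℕ)) : Set (ℝ × ℝ) :=
  closure (convexHull ℝ ((fun p : ℕ × ℕ => ((p.1 : ℝ), (p.2 : ℝ))) '' E + Quad))

/-- `σ` is a semiring homomorphism Conv_≥(ℕ × ℕ) → R. -/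
def IsConvHom {R : Type*} [CommSemiring R] (σ : Set (ℝ × ℝ) → R) : Prop :=
  σ ∅ = 0 ∧ σ Quad = 1 ∧
  ∀ C C' : Set (ℝ × ℝ), IsConvGE C → IsConvGE C' →
    σ (closure (convexHull ℝ (C ∪ C'))) = σ C + σ C' ∧ σ (C + C') = σ C * σ C'


open Set

namespace Stmt14Aux

/-- Sorted triangle lemma: a convex combination of three planar points dominates
a convex combination of two of them. -/
lemma tri_sorted (a b d : ℝ × ℝ) (α β δ x y : ℝ) (hα : 0 ≤ α) (hβ : 0 ≤ β) (hδ : 0 ≤ δ)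
    (hsum : α + β + δ = 1) (hab : a.1 ≤ b.1) (hbd : b.1 ≤ d.1)
    (hx : α * a.1 + β * b.1 + δ * d.1 ≤ x) (hy : α * a.2 + β * b.2 + δ * d.2 ≤ y) :
    ∃ p q : ℝ × ℝ, (p = a ∨ p = b ∨ p = d) ∧ (q = a ∨ q = b ∨ q = d) ∧
      ∃ l : ℝ, 0 ≤ l ∧ l ≤ 1 ∧ l * p.1 + (1 - l) * q.1 ≤ x ∧ l * p.2 + (1 - l) * q.2 ≤ y := by
  have had : a.1 ≤ d.1 := hab.trans hbd
  have hmul : ∀ t : ℝ, (α + β + δ) * t = t := fun t => by rw [hsum, one_mul]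
  have hc1a : a.1 ≤ α * a.1 + β * b.1 + δ * d.1 := by
    nlinarith [hmul a.1, mul_nonneg hβ (sub_nonneg.2 hab), mul_nonneg hδ (sub_nonneg.2 had)]
  have hc1d : α * a.1 + β * b.1 + δ * d.1 ≤ d.1 := by
    nlinarith [hmul d.1, mul_nonneg hα (sub_nonneg.2 had), mul_nonneg hβ (sub_nonneg.2 hbd)]
  rcases eq_or_lt_of_le had with heq | hlt
  · -- all first coordinates are equal
    have hba : b.1 = a.1 := le_antisymm (heq ▸ hbd) hab
    rcases le_total a.2 b.2 with h1 | h1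
    · rcases le_total a.2 d.2 with h2 | h2
      · refine ⟨a, a, Or.inl rfl, Or.inl rfl, 0, le_refl 0, zero_le_one, by linarith, ?_⟩
        nlinarith [hmul a.2, mul_nonneg hβ (sub_nonneg.2 h1), mul_nonneg hδ (sub_nonneg.2 h2)]
      · refine ⟨d, d, Or.inr (Or.inr rfl), Or.inr (Or.inr rfl), 0, le_refl 0, zero_le_one,
          by linarith, ?_⟩
        nlinarith [hmul d.2, mul_nonneg hα (sub_nonneg.2 h2),
          mul_nonneg hβ (sub_nonneg.2 (h2.trans h1))]
    · rcases le_total b.2 d.2 with h2 | h2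
      · refine ⟨b, b, Or.inr (Or.inl rfl), Or.inr (Or.inl rfl), 0, le_refl 0, zero_le_one,
          by rw [hba]; linarith, ?_⟩
        nlinarith [hmul b.2, mul_nonneg hα (sub_nonneg.2 h1), mul_nonneg hδ (sub_nonneg.2 h2)]
      · refine ⟨d, d, Or.inr (Or.inr rfl), Or.inr (Or.inr rfl), 0, le_refl 0, zero_le_one,
          by linarith, ?_⟩
        nlinarith [hmul d.2, mul_nonneg hα (sub_nonneg.2 (h2.trans h1)),
          mul_nonneg hβ (sub_nonneg.2 h2)]
  · -- a.1 < d.1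
    by_cases hB : (b.1 - a.1) * (d.2 - a.2) ≤ (d.1 - a.1) * (b.2 - a.2)
    · -- b lies on or above the segment [a,d]; use a and d
      set μ := (d.1 - b.1) / (d.1 - a.1) with hμdef
      have hden : (0:ℝ) < d.1 - a.1 := by linarith
      have hμt : μ * (d.1 - a.1) = d.1 - b.1 := div_mul_cancel₀ _ hden.ne'
      have hμ0 : 0 ≤ μ := div_nonneg (by linarith) hden.le
      have hμ1 : μ ≤ 1 := div_le_one_of_le₀ (by linarith) hden.le
      have hβμ : β * (μ * (d.1 - a.1)) = β * (d.1 - b.1) := by rw [hμt]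
      refine ⟨a, d, Or.inl rfl, Or.inr (Or.inr rfl), α + β * μ,
        add_nonneg hα (mul_nonneg hβ hμ0), ?_, ?_, ?_⟩
      · linarith [mul_le_of_le_one_right hβ hμ1]
      · nlinarith [hβμ, hmul d.1]
      · have h2 : μ * a.2 + (1 - μ) * d.2 ≤ b.2 := by
          rw [← sub_nonneg]
          have hrw : b.2 - (μ * a.2 + (1 - μ) * d.2) =
              ((d.1 - a.1) * b.2 - (d.1 - b.1) * a.2 - (b.1 - a.1) * d.2) / (d.1 - a.1) := by
            rw [hμdef]; field_simp; ring
          rw [hrw]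
          exact div_nonneg (by linarith [hB]) hden.le
        have hβ2 := mul_le_mul_of_nonneg_left h2 hβ
        nlinarith [hβ2, hmul d.2]
    · push_neg at hB
      have hD : 0 < (b.1 - a.1) * (d.2 - a.2) - (d.1 - a.1) * (b.2 - a.2) := by linarith
      by_cases hcb : α * a.1 + β * b.1 + δ * d.1 ≤ b.1
      · rcases eq_or_lt_of_le hab with hab' | hab'
        · -- a.1 = b.1 forces δ = 0
          have hδ0 : δ * (d.1 - a.1) ≤ 0 := by nlinarith [hmul b.1, hcb]
          have hδz : δ = 0 := by
            rcases (mul_nonneg hδ (by linarith : (0:ℝ) ≤ d.1 - a.1)).lt_or_eq with h | h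
            · linarith
            · rcases mul_eq_zero.1 h.symm with h' | h'
              · exact h'
              · exfalso; linarith
          have hβ1 : β = 1 - α := by rw [hδz] at hsum; linarith
          have hb1 : β * b.1 = b.1 - α * b.1 := by rw [hβ1]; ring
          have hb2 : β * b.2 = b.2 - α * b.2 := by rw [hβ1]; ring
          have hd1 : δ * d.1 = 0 := by rw [hδz, zero_mul]
          have hd2 : δ * d.2 = 0 := by rw [hδz, zero_mul]
          exact ⟨a, b, Or.inl rfl, Or.inr (Or.inl rfl), α, hα, by linarith,
            by linarith [hb1, hd1, hx], by linarith [hb2, hd2, hy]⟩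
        · -- use a and b
          have key : (b.1 - a.1) * ((α * a.2 + β * b.2 + δ * d.2) - a.2)
              - (b.2 - a.2) * ((α * a.1 + β * b.1 + δ * d.1) - a.1)
              = δ * ((b.1 - a.1) * (d.2 - a.2) - (d.1 - a.1) * (b.2 - a.2)) := by
            linear_combination ((b.1 - a.1) * a.2 - (b.2 - a.2) * a.1) * hsum
          have hdet : 0 ≤ (b.1 - a.1) * ((α * a.2 + β * b.2 + δ * d.2) - a.2)
              - (b.2 - a.2) * ((α * a.1 + β * b.1 + δ * d.1) - a.1) := by
            rw [key]; exact mul_nonneg hδ hD.le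
          set l := (b.1 - (α * a.1 + β * b.1 + δ * d.1)) / (b.1 - a.1) with hldef
          have hba : (0:ℝ) < b.1 - a.1 := by linarith
          have h3 : l * (b.1 - a.1) = b.1 - (α * a.1 + β * b.1 + δ * d.1) :=
            div_mul_cancel₀ _ hba.ne'
          refine ⟨a, b, Or.inl rfl, Or.inr (Or.inl rfl), l,
            div_nonneg (by linarith) hba.le, div_le_one_of_le₀ (by linarith) hba.le, ?_, ?_⟩
          · linarith [h3]
          · have h6 : ((α * a.2 + β * b.2 + δ * d.2) - (l * a.2 + (1 - l) * b.2)) * (b.1 - a.1)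
                = (b.1 - a.1) * ((α * a.2 + β * b.2 + δ * d.2) - a.2)
                  - (b.2 - a.2) * ((α * a.1 + β * b.1 + δ * d.1) - a.1) := by
              linear_combination (b.2 - a.2) * h3
            have h7 : 0 ≤ (α * a.2 + β * b.2 + δ * d.2) - (l * a.2 + (1 - l) * b.2) :=
              (mul_nonneg_iff_of_pos_right hba).1 (by rw [h6]; exact hdet)
            linarith [h7]
      · push_neg at hcb
        rcases eq_or_lt_of_le hbd with hbd' | hbd'
        · exfalso; linarith [hc1d, hcb, hbd']
        · -- use b and d
          have key : (d.1 - b.1) * ((α * a.2 + β * b.2 + δ * d.2) - b.2)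
              - (d.2 - b.2) * ((α * a.1 + β * b.1 + δ * d.1) - b.1)
              = α * ((b.1 - a.1) * (d.2 - a.2) - (d.1 - a.1) * (b.2 - a.2)) := by
            linear_combination ((d.1 - b.1) * b.2 - (d.2 - b.2) * b.1) * hsum
          have hdet : 0 ≤ (d.1 - b.1) * ((α * a.2 + β * b.2 + δ * d.2) - b.2)
              - (d.2 - b.2) * ((α * a.1 + β * b.1 + δ * d.1) - b.1) := by
            rw [key]; exact mul_nonneg hα hD.le
          set l := (d.1 - (α * a.1 + β * b.1 + δ * d.1)) / (d.1 - b.1) with hldef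
          have hdb : (0:ℝ) < d.1 - b.1 := by linarith
          have h3 : l * (d.1 - b.1) = d.1 - (α * a.1 + β * b.1 + δ * d.1) :=
            div_mul_cancel₀ _ hdb.ne'
          refine ⟨b, d, Or.inr (Or.inl rfl), Or.inr (Or.inr rfl), l,
            div_nonneg (by linarith) hdb.le, div_le_one_of_le₀ (by linarith) hdb.le, ?_, ?_⟩
          · linarith [h3]
          · have h6 : ((α * a.2 + β * b.2 + δ * d.2) - (l * b.2 + (1 - l) * d.2)) * (d.1 - b.1)
                = (d.1 - b.1) * ((α * a.2 + β * b.2 + δ * d.2) - b.2)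
                  - (d.2 - b.2) * ((α * a.1 + β * b.1 + δ * d.1) - b.1) := by
              linear_combination (d.2 - b.2) * h3
            have h7 : 0 ≤ (α * a.2 + β * b.2 + δ * d.2) - (l * b.2 + (1 - l) * d.2) :=
              (mul_nonneg_iff_of_pos_right hdb).1 (by rw [h6]; exact hdet)
            linarith [h7]


/-- Unsorted triangle lemma. -/
lemma tri (a b d : ℝ × ℝ) (α β δ x y : ℝ) (hα : 0 ≤ α) (hβ : 0 ≤ β) (hδ : 0 ≤ δ)
    (hsum : α + β + δ = 1)
    (hx : α * a.1 + β * b.1 + δ * d.1 ≤ x) (hy : α * a.2 + β * b.2 + δ * d.2 ≤ y) :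
    ∃ p q : ℝ × ℝ, (p = a ∨ p = b ∨ p = d) ∧ (q = a ∨ q = b ∨ q = d) ∧
      ∃ l : ℝ, 0 ≤ l ∧ l ≤ 1 ∧ l * p.1 + (1 - l) * q.1 ≤ x ∧ l * p.2 + (1 - l) * q.2 ≤ y := by
  rcases le_total a.1 b.1 with h1 | h1
  · rcases le_total b.1 d.1 with h2 | h2
    · obtain ⟨p, q, hp, hq, r⟩ := tri_sorted a b d α β δ x y hα hβ hδ hsum h1 h2
        (by linarith) (by linarith)
      exact ⟨p, q, by tauto, by tauto, r⟩
    · rcases le_total a.1 d.1 with h3 | h3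
      · obtain ⟨p, q, hp, hq, r⟩ := tri_sorted a d b α δ β x y hα hδ hβ (by linarith) h3 h2
          (by linarith) (by linarith)
        exact ⟨p, q, by tauto, by tauto, r⟩
      · obtain ⟨p, q, hp, hq, r⟩ := tri_sorted d a b δ α β x y hδ hα hβ (by linarith) h3 h1
          (by linarith) (by linarith)
        exact ⟨p, q, by tauto, by tauto, r⟩
  · rcases le_total b.1 d.1 with h2 | h2
    · rcases le_total a.1 d.1 with h3 | h3
      · obtain ⟨p, q, hp, hq, r⟩ := tri_sorted b a d β α δ x y hβ hα hδ (by linarith) h1 h3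
          (by linarith) (by linarith)
        exact ⟨p, q, by tauto, by tauto, r⟩
      · obtain ⟨p, q, hp, hq, r⟩ := tri_sorted b d a β δ α x y hβ hδ hα (by linarith) h2 h3
          (by linarith) (by linarith)
        exact ⟨p, q, by tauto, by tauto, r⟩
    · obtain ⟨p, q, hp, hq, r⟩ := tri_sorted d b a δ β α x y hδ hβ hα (by linarith) h2 h1
        (by linarith) (by linarith)
      exact ⟨p, q, by tauto, by tauto, r⟩

/-- Every point of the convex hull of a planar set dominates a convex combination
of two of its points. -/
lemma pair_dom {s : Set (ℝ × ℝ)} {c : ℝ × ℝ} (hc : c ∈ convexHull ℝ s) :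
    ∃ a ∈ s, ∃ b ∈ s, ∃ l : ℝ, 0 ≤ l ∧ l ≤ 1 ∧
      l * a.1 + (1 - l) * b.1 ≤ c.1 ∧ l * a.2 + (1 - l) * b.2 ≤ c.2 := by
  rw [convexHull_eq_union_convexHull_finite_subsets] at hc
  simp only [mem_iUnion] at hc
  obtain ⟨t, hts, hct⟩ := hc
  suffices H : ∀ (t : Finset (ℝ × ℝ)) (c : ℝ × ℝ), c ∈ convexHull ℝ (t : Set (ℝ × ℝ)) →
      ∃ a ∈ (t : Set (ℝ × ℝ)), ∃ b ∈ (t : Set (ℝ × ℝ)), ∃ l : ℝ, 0 ≤ l ∧ l ≤ 1 ∧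
        l * a.1 + (1 - l) * b.1 ≤ c.1 ∧ l * a.2 + (1 - l) * b.2 ≤ c.2 by
    obtain ⟨a, ha, b, hb, r⟩ := H t c hct
    exact ⟨a, hts ha, b, hts hb, r⟩
  clear hts hct t c
  intro t
  induction t using Finset.induction_on with
  | empty => intro c hc; simp at hc
  | @insert w t hw ih =>
    intro c hc
    rcases t.eq_empty_or_nonempty with rfl | hne
    · have h1 : ((insert w ∅ : Finset (ℝ × ℝ)) : Set (ℝ × ℝ)) = {w} := by simp
      rw [h1, convexHull_singleton, mem_singleton_iff] at hc
      subst hc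
      exact ⟨c, by simp [h1], c, by simp [h1], 1, zero_le_one, le_refl 1,
        le_of_eq (by ring), le_of_eq (by ring)⟩
    · rw [Finset.coe_insert, convexHull_insert (Finset.coe_nonempty.2 hne)] at hc
      obtain ⟨x', hx', z, hz, hseg⟩ := mem_convexJoin.1 hc
      rw [mem_singleton_iff] at hx'
      subst hx'
      obtain ⟨u, v, hu, hv, huv, hcuv⟩ := hseg
      obtain ⟨a, ha, b, hb, l, hl0, hl1, hA1, hA2⟩ := ih z hz
      have hc1 : c.1 = u * x'.1 + v * z.1 := by
        rw [← hcuv]; simp [Prod.smul_def, smul_eq_mul]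
      have hc2 : c.2 = u * x'.2 + v * z.2 := by
        rw [← hcuv]; simp [Prod.smul_def, smul_eq_mul]
      have hvz1 := mul_le_mul_of_nonneg_left hA1 hv
      have hvz2 := mul_le_mul_of_nonneg_left hA2 hv
      obtain ⟨p, q, hp, hq, m, hm0, hm1, hm2, hm3⟩ := tri x' a b u (v * l) (v * (1 - l)) c.1 c.2
        hu (mul_nonneg hv hl0) (mul_nonneg hv (by linarith)) (by linear_combination huv)
        (by nlinarith [hvz1]) (by nlinarith [hvz2])
      refine ⟨p, ?_, q, ?_, m, hm0, hm1, hm2, hm3⟩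
      · rcases hp with rfl | rfl | rfl <;> simp [ha, hb]
      · rcases hq with rfl | rfl | rfl <;> simp [ha, hb]


/-! ### Upper sets in ℕ × ℕ and the map `gam` -/

def emb (p : ℕ × ℕ) : ℝ × ℝ := ((p.1 : ℝ), (p.2 : ℝ))

def latt (C : Set (ℝ × ℝ)) : Set (ℕ × ℕ) := emb ⁻¹' C

lemma emb_add (p q : ℕ × ℕ) : emb (p + q) = emb p + emb q := by
  simp [emb, Prod.ext_iff]

lemma gam_def (E : Set (ℕ × ℕ)) : gam E = closure (convexHull ℝ (emb '' E + Quad)) := rfl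

lemma quad_eq_prod : Quad = Set.Ici (0:ℝ) ×ˢ Set.Ici (0:ℝ) := by
  ext p; simp [Quad, Set.mem_prod, Prod.le_def]

lemma quad_closed : IsClosed Quad := by
  rw [quad_eq_prod]; exact isClosed_Ici.prod isClosed_Ici

lemma quad_convex : Convex ℝ Quad := by
  rw [quad_eq_prod]; exact (convex_Ici _).prod (convex_Ici _)

lemma zero_mem_quad : (0 : ℝ × ℝ) ∈ Quad := ⟨le_refl 0, le_refl 0⟩

lemma quad_add : Quad + Quad = Quad := by
  apply Subset.antisymm
  · rintro x ⟨a, ha, b, hb, rfl⟩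
    exact ⟨add_nonneg ha.1 hb.1, add_nonneg ha.2 hb.2⟩
  · intro x hx
    exact ⟨x, hx, 0, zero_mem_quad, add_zero x⟩

lemma emb_mem_quad (p : ℕ × ℕ) : emb p ∈ Quad :=
  ⟨Nat.cast_nonneg _, Nat.cast_nonneg _⟩

lemma emb_sub_mem_quad {p q : ℕ × ℕ} (h : p ≤ q) : emb q - emb p ∈ Quad := by
  exact ⟨by simp [emb]; exact_mod_cast h.1, by simp [emb]; exact_mod_cast h.2⟩

/-- The set of minimal elements of `E`. -/
def Mins (E : Set (ℕ × ℕ)) : Set (ℕ × ℕ) := {m | m ∈ E ∧ ∀ m' ∈ E, m' ≤ m → m' = m}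

lemma exists_min_aux (E : Set (ℕ × ℕ)) :
    ∀ n : ℕ, ∀ e : ℕ × ℕ, e ∈ E → e.1 + e.2 ≤ n → ∃ m ∈ Mins E, m ≤ e := by
  intro n
  induction n with
  | zero =>
    intro e he h0
    refine ⟨e, ⟨he, fun m' _ hle => ?_⟩, le_refl e⟩
    obtain ⟨h1, h2⟩ := hle
    exact Prod.ext (by omega) (by omega)
  | succ n ih =>
    intro e he hn
    by_cases hmin : ∀ m' ∈ E, m' ≤ e → m' = e
    · exact ⟨e, ⟨he, hmin⟩, le_refl e⟩
    · push_neg at hmin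
      obtain ⟨m', hm', hle, hne⟩ := hmin
      obtain ⟨h1, h2⟩ := hle
      have hlt : m'.1 + m'.2 ≤ n := by
        rcases Nat.lt_or_ge (m'.1 + m'.2) (e.1 + e.2) with h | h
        · omega
        · exact absurd (Prod.ext (by omega) (by omega)) hne
      obtain ⟨m, hm, hle'⟩ := ih m' hm' hlt
      exact ⟨m, hm, hle'.trans ⟨h1, h2⟩⟩

lemma exists_min {E : Set (ℕ × ℕ)} {e : ℕ × ℕ} (he : e ∈ E) : ∃ m ∈ Mins E, m ≤ e :=
  exists_min_aux E (e.1 + e.2) e he (le_refl _)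

lemma mins_subset (E : Set (ℕ × ℕ)) : Mins E ⊆ E := fun _ hm => hm.1

lemma mins_finite (E : Set (ℕ × ℕ)) : (Mins E).Finite := by
  have h1 : (Set.univ : Set ℕ).IsPWO := (Set.isWF_univ_iff.2 (inferInstance : WellFoundedLT ℕ)).isPWO
  have hpwo : (Mins E).IsPWO :=
    (h1.prod h1).mono (by rw [Set.univ_prod_univ]; exact subset_univ _)
  apply IsAntichain.finite_of_partiallyWellOrderedOn _ hpwo
  intro p hp q hq hne hle
  exact hne (hq.2 p hp.1 hle)

lemma mins_nonempty {E : Set (ℕ × ℕ)} (hne : E.Nonempty) : (Mins E).Nonempty := by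
  obtain ⟨e, he⟩ := hne
  obtain ⟨m, hm, -⟩ := exists_min he
  exact ⟨m, hm⟩

lemma imq {E : Set (ℕ × ℕ)} (hE : IsUpperSet E) :
    emb '' E + Quad = emb '' Mins E + Quad := by
  apply Subset.antisymm
  · rintro x ⟨-, ⟨e, he, rfl⟩, t, ht, rfl⟩
    obtain ⟨m, hm, hle⟩ := exists_min he
    refine ⟨emb m, ⟨m, hm, rfl⟩, emb e - emb m + t, ?_, by abel⟩
    obtain ⟨h1, h2⟩ := emb_sub_mem_quad hle
    exact ⟨by simpa using add_nonneg h1 ht.1, by simpa using add_nonneg h2 ht.2⟩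
  · exact add_subset_add_right (image_mono (mins_subset E))

lemma gam_eq {E : Set (ℕ × ℕ)} (hE : IsUpperSet E) (hne : E.Nonempty) :
    gam E = convexHull ℝ (emb '' Mins E) + Quad := by
  rw [gam_def, imq hE, convexHull_add, quad_convex.convexHull_eq]
  exact IsClosed.closure_eq
    (quad_closed.add_left_of_isCompact (((mins_finite E).image emb).isCompact_convexHull ℝ))

lemma gam_closed (E : Set (ℕ × ℕ)) : IsClosed (gam E) := isClosed_closure

lemma gam_convex (E : Set (ℕ × ℕ)) : Convex ℝ (gam E) :=
  (convex_convexHull ℝ _).closure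

lemma gam_add_quad {E : Set (ℕ × ℕ)} (hE : IsUpperSet E) (hne : E.Nonempty) :
    gam E + Quad = gam E := by
  rw [gam_eq hE hne, add_assoc, quad_add]

lemma subset_gam {E : Set (ℕ × ℕ)} {e : ℕ × ℕ} (he : e ∈ E) : emb e ∈ gam E :=
  subset_closure (subset_convexHull ℝ _ ⟨emb e, ⟨e, he, rfl⟩, 0, zero_mem_quad, add_zero _⟩)

lemma subset_latt_gam {E : Set (ℕ × ℕ)} : E ⊆ latt (gam E) := fun _ he => subset_gam he

lemma gam_subset_quad (E : Set (ℕ × ℕ)) : gam E ⊆ Quad := by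
  apply closure_minimal _ quad_closed
  apply convexHull_min _ quad_convex
  rintro x ⟨a, ⟨e, -, rfl⟩, t, ht, rfl⟩
  exact ⟨add_nonneg (Nat.cast_nonneg _) ht.1, add_nonneg (Nat.cast_nonneg _) ht.2⟩

lemma latt_upper {C : Set (ℝ × ℝ)} (hCQ : C + Quad = C) : IsUpperSet (latt C) := by
  intro p q hle hp
  have : emb q = emb p + (emb q - emb p) := by abel
  show emb q ∈ C
  rw [this, ← hCQ]
  exact ⟨emb p, hp, emb q - emb p, emb_sub_mem_quad hle, rfl⟩

lemma gam_empty : gam (∅ : Set (ℕ × ℕ)) = ∅ := by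
  rw [gam_def]
  simp [Set.empty_add]

lemma latt_empty : latt (∅ : Set (ℝ × ℝ)) = ∅ := by
  simp [latt]

lemma upper_add {E F : Set (ℕ × ℕ)} (hE : IsUpperSet E) (hF : IsUpperSet F) :
    IsUpperSet (E + F) := by
  rintro a b hab ⟨e, he, f, hf, rfl⟩
  have h1 : e.1 + f.1 ≤ b.1 := by simpa using hab.1
  have h2 : e.2 + f.2 ≤ b.2 := by simpa using hab.2
  refine ⟨e, he, (b.1 - e.1, b.2 - e.2),
    hF (show f ≤ (b.1 - e.1, b.2 - e.2) from ⟨by omega, by omega⟩) hf,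
    Prod.ext (by simp only [Prod.fst_add]; omega) (by simp only [Prod.snd_add]; omega)⟩


/-! ### The key lemma: sat E + sat E ⊆ E + sat E -/

lemma sat_step {E : Set (ℕ × ℕ)} (hE : IsUpperSet E) (hne : E.Nonempty)
    {p q : ℕ × ℕ} {A B : ℝ × ℝ} (hA : A ∈ emb '' Mins E) (hB : B ∈ emb '' Mins E)
    {l : ℝ} (hl : 1/2 ≤ l) (hl1 : l ≤ 1)
    (h1 : l * A.1 + (1 - l) * B.1 ≤ (((p.1 : ℝ) + q.1)) / 2)
    (h2 : l * A.2 + (1 - l) * B.2 ≤ (((p.2 : ℝ) + q.2)) / 2) :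
    p + q ∈ E + latt (gam E) := by
  obtain ⟨m, hm, rfl⟩ := hA
  obtain ⟨m', hm', rfl⟩ := hB
  have em1 : (emb m).1 = (m.1 : ℝ) := rfl
  have em2 : (emb m).2 = (m.2 : ℝ) := rfl
  have em'1 : (emb m').1 = (m'.1 : ℝ) := rfl
  have em'2 : (emb m').2 = (m'.2 : ℝ) := rfl
  rw [em1, em'1] at h1
  rw [em2, em'2] at h2
  have hB1 : (0:ℝ) ≤ (m'.1 : ℝ) := Nat.cast_nonneg _
  have hB2 : (0:ℝ) ≤ (m'.2 : ℝ) := Nat.cast_nonneg _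
  have hA1 : (0:ℝ) ≤ (m.1 : ℝ) := Nat.cast_nonneg _
  have hA2 : (0:ℝ) ≤ (m.2 : ℝ) := Nat.cast_nonneg _
  -- m ≤ p + q
  have hle1 : (m.1 : ℝ) ≤ (p.1 : ℝ) + q.1 := by
    nlinarith [mul_nonneg (by linarith : (0:ℝ) ≤ 2*l - 1) hA1,
      mul_nonneg (by linarith : (0:ℝ) ≤ 2 - 2*l) hB1]
  have hle2 : (m.2 : ℝ) ≤ (p.2 : ℝ) + q.2 := by
    nlinarith [mul_nonneg (by linarith : (0:ℝ) ≤ 2*l - 1) hA2,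
      mul_nonneg (by linarith : (0:ℝ) ≤ 2 - 2*l) hB2]
  have hmle1 : m.1 ≤ p.1 + q.1 := by exact_mod_cast (by push_cast; exact hle1 : (m.1:ℝ) ≤ ((p.1 + q.1 : ℕ) : ℝ))
  have hmle2 : m.2 ≤ p.2 + q.2 := by exact_mod_cast (by push_cast; exact hle2 : (m.2:ℝ) ≤ ((p.2 + q.2 : ℕ) : ℝ))
  set r : ℕ × ℕ := (p.1 + q.1 - m.1, p.2 + q.2 - m.2) with hr
  have hre : emb r = emb (p + q) - emb m := by
    refine Prod.ext ?_ ?_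
    · show ((p.1 + q.1 - m.1 : ℕ) : ℝ) = ((p + q).1 : ℝ) - (m.1 : ℝ)
      rw [Nat.cast_sub hmle1]; push_cast; simp
    · show ((p.2 + q.2 - m.2 : ℕ) : ℝ) = ((p + q).2 : ℝ) - (m.2 : ℝ)
      rw [Nat.cast_sub hmle2]; push_cast; simp
  set K := (2*l - 1) • emb m + (2 - 2*l) • emb m' with hK
  have hcomb : K ∈ convexHull ℝ (emb '' Mins E) :=
    (convex_convexHull ℝ _)
      (subset_convexHull ℝ (emb '' Mins E) (⟨m, hm, rfl⟩ : emb m ∈ emb '' Mins E))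
      (subset_convexHull ℝ (emb '' Mins E) (⟨m', hm', rfl⟩ : emb m' ∈ emb '' Mins E))
      (by linarith) (by linarith) (by ring)
  have hK1 : K.1 = (2*l-1) * (m.1 : ℝ) + (2-2*l) * (m'.1 : ℝ) := by
    rw [hK]; simp [Prod.smul_def, smul_eq_mul]; rw [← em1, ← em'1]
  have hK2 : K.2 = (2*l-1) * (m.2 : ℝ) + (2-2*l) * (m'.2 : ℝ) := by
    rw [hK]; simp [Prod.smul_def, smul_eq_mul]; rw [← em2, ← em'2]
  have hpq1 : (emb (p+q)).1 = ((p.1 : ℝ) + q.1) := by simp [emb, Prod.fst_add]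
  have hpq2 : (emb (p+q)).2 = ((p.2 : ℝ) + q.2) := by simp [emb, Prod.snd_add]
  have hrQ : emb r - K ∈ Quad := by
    rw [hre]
    constructor
    · show (0:ℝ) ≤ (emb (p+q) - emb m - K).1
      simp only [Prod.fst_sub]
      rw [hK1, hpq1, em1]
      linarith [h1]
    · show (0:ℝ) ≤ (emb (p+q) - emb m - K).2
      simp only [Prod.snd_sub]
      rw [hK2, hpq2, em2]
      linarith [h2]
  clear_value K
  have hrmem : r ∈ latt (gam E) := by
    show emb r ∈ gam E
    rw [gam_eq hE hne]
    exact ⟨K, hcomb, emb r - K, hrQ, by show K + (emb r - K) = emb r; rw [← add_sub_assoc, add_sub_cancel_left]⟩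
  refine ⟨m, hm.1, r, hrmem, ?_⟩
  exact Prod.ext (by simp only [Prod.fst_add, hr]; omega) (by simp only [Prod.snd_add, hr]; omega)

lemma sat_add_sat {E : Set (ℕ × ℕ)} (hE : IsUpperSet E) (hne : E.Nonempty) :
    latt (gam E) + latt (gam E) ⊆ E + latt (gam E) := by
  rintro z ⟨p, hp, q, hq, rfl⟩
  have hp' : emb p ∈ gam E := hp
  have hq' : emb q ∈ gam E := hq
  rw [gam_eq hE hne] at hp' hq'
  obtain ⟨cp, hcp, tp, htp, hcpe⟩ := hp'
  obtain ⟨cq, hcq, tq, htq, hcqe⟩ := hq'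
  have hw : (1/2 : ℝ) • cp + (1/2 : ℝ) • cq ∈ convexHull ℝ (emb '' Mins E) :=
    (convex_convexHull ℝ _) hcp hcq (by norm_num) (by norm_num) (by norm_num)
  obtain ⟨A, hA, B, hB, l, hl0, hl1, h1, h2⟩ := pair_dom hw
  have hw1 : ((1/2 : ℝ) • cp + (1/2 : ℝ) • cq).1 = (cp.1 + cq.1) / 2 := by
    simp [Prod.smul_def, smul_eq_mul]; ring
  have hw2 : ((1/2 : ℝ) • cp + (1/2 : ℝ) • cq).2 = (cp.2 + cq.2) / 2 := by
    simp [Prod.smul_def, smul_eq_mul]; ring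
  have hcpe' : cp + tp = emb p := hcpe
  have hcqe' : cq + tq = emb q := hcqe
  have hp1 := congrArg Prod.fst hcpe'
  have hp2 := congrArg Prod.snd hcpe'
  have hq1 := congrArg Prod.fst hcqe'
  have hq2 := congrArg Prod.snd hcqe'
  simp only [Prod.fst_add, Prod.snd_add] at hp1 hp2 hq1 hq2
  have hep1 : (emb p).1 = (p.1 : ℝ) := rfl
  have hep2 : (emb p).2 = (p.2 : ℝ) := rfl
  have heq1 : (emb q).1 = (q.1 : ℝ) := rfl
  have heq2 : (emb q).2 = (q.2 : ℝ) := rfl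
  have hcp1 : cp.1 ≤ (p.1 : ℝ) := by linarith [htp.1, hp1, hep1]
  have hcp2 : cp.2 ≤ (p.2 : ℝ) := by linarith [htp.2, hp2, hep2]
  have hcq1 : cq.1 ≤ (q.1 : ℝ) := by linarith [htq.1, hq1, heq1]
  have hcq2 : cq.2 ≤ (q.2 : ℝ) := by linarith [htq.2, hq2, heq2]
  rw [hw1] at h1
  rw [hw2] at h2
  rcases le_total (1/2 : ℝ) l with hl | hl
  · exact sat_step hE hne hA hB hl hl1 (by linarith) (by linarith)
  · refine sat_step hE hne hB hA (l := 1 - l) (by linarith) (by linarith) (by linarith) (by linarith)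

/-! ### gam on unions and sums -/

lemma ccu (s t : Set (ℝ × ℝ)) :
    closure (convexHull ℝ (closure (convexHull ℝ s) ∪ closure (convexHull ℝ t)))
      = closure (convexHull ℝ (s ∪ t)) := by
  apply Subset.antisymm
  · apply closure_minimal _ isClosed_closure
    apply convexHull_min _ ((convex_convexHull ℝ _).closure)
    apply union_subset
    · exact closure_mono (convexHull_mono subset_union_left)
    · exact closure_mono (convexHull_mono subset_union_right)
  · apply closure_mono
    apply convexHull_mono
    exact union_subset_union ((subset_convexHull ℝ _).trans subset_closure)
      ((subset_convexHull ℝ _).trans subset_closure)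

lemma gam_union (E E' : Set (ℕ × ℕ)) :
    closure (convexHull ℝ (gam E ∪ gam E')) = gam (E ∪ E') := by
  rw [gam_def, gam_def, gam_def, ccu, image_union, union_add]

lemma im_add_quad_eq {E E' : Set (ℕ × ℕ)} (hE : IsUpperSet E) (hE' : IsUpperSet E') :
    emb '' (E + E') + Quad = (emb '' Mins E + emb '' Mins E') + Quad := by
  apply Subset.antisymm
  · rintro x ⟨-, ⟨s, ⟨e, he, e', he', rfl⟩, rfl⟩, t, ht, rfl⟩
    obtain ⟨m, hm, hle⟩ := exists_min he
    obtain ⟨m', hm', hle'⟩ := exists_min he'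
    refine ⟨emb m + emb m', ⟨emb m, ⟨m, hm, rfl⟩, emb m', ⟨m', hm', rfl⟩, rfl⟩,
      (emb (e + e') - emb m - emb m') + t, ?_, by abel⟩
    have k1 : (0:ℝ) ≤ (emb e).1 - (emb m).1 := (emb_sub_mem_quad hle).1
    have k2 : (0:ℝ) ≤ (emb e').1 - (emb m').1 := (emb_sub_mem_quad hle').1
    have k3 : (0:ℝ) ≤ (emb e).2 - (emb m).2 := (emb_sub_mem_quad hle).2
    have k4 : (0:ℝ) ≤ (emb e').2 - (emb m').2 := (emb_sub_mem_quad hle').2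
    constructor
    · show (0:ℝ) ≤ ((emb (e + e') - emb m - emb m') + t).1
      rw [emb_add]
      simp only [Prod.fst_add, Prod.fst_sub]
      linarith [k1, k2, ht.1]
    · show (0:ℝ) ≤ ((emb (e + e') - emb m - emb m') + t).2
      rw [emb_add]
      simp only [Prod.snd_add, Prod.snd_sub]
      linarith [k3, k4, ht.2]
  · rintro x ⟨-, ⟨a, ⟨m, hm, rfl⟩, b, ⟨m', hm', rfl⟩, rfl⟩, t, ht, rfl⟩
    exact ⟨emb (m + m'), ⟨m + m', ⟨m, hm.1, m', hm'.1, rfl⟩, rfl⟩, t, ht, by rw [emb_add]⟩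

lemma gam_add {E E' : Set (ℕ × ℕ)} (hE : IsUpperSet E) (hE' : IsUpperSet E')
    (hne : E.Nonempty) (hne' : E'.Nonempty) :
    gam (E + E') = gam E + gam E' := by
  rw [gam_def, im_add_quad_eq hE hE', convexHull_add, convexHull_add, quad_convex.convexHull_eq]
  rw [IsClosed.closure_eq]
  · rw [gam_eq hE hne, gam_eq hE' hne']
    rw [add_add_add_comm, quad_add]
  · apply quad_closed.add_left_of_isCompact
    rw [← convexHull_add]
    apply Set.Finite.isCompact_convexHull
    exact ((mins_finite E).image emb).add ((mins_finite E').image emb)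


/-! ### Every IsConvGE set is the gam of its lattice points -/

lemma extreme_min {C : Set (ℝ × ℝ)} (hCq : C ⊆ Quad) (hCc : IsClosed C)
    {x : ℝ × ℝ} (hx : x ∈ C) {v1 v2 : ℝ} (h1 : 0 < v1) (h2 : 0 < v2) :
    ∃ z ∈ Set.extremePoints ℝ C, v1 * z.1 + v2 * z.2 ≤ v1 * x.1 + v2 * x.2 := by
  set f : ℝ × ℝ →L[ℝ] ℝ := v1 • ContinuousLinearMap.fst ℝ ℝ ℝ + v2 • ContinuousLinearMap.snd ℝ ℝ ℝ
    with hf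
  have hfapp : ∀ y : ℝ × ℝ, f y = v1 * y.1 + v2 * y.2 := fun y => by
    simp [hf, ContinuousLinearMap.add_apply, ContinuousLinearMap.smul_apply, smul_eq_mul]
  set K := C ∩ {y : ℝ × ℝ | f y ≤ f x} with hK
  have hKc : IsClosed K := hCc.inter (isClosed_le f.continuous continuous_const)
  have hKb : Bornology.IsBounded K := by
    apply (Bornology.IsBounded.prod (Metric.isBounded_Icc (0:ℝ) (f x / v1))
      (Metric.isBounded_Icc (0:ℝ) (f x / v2))).subset
    rintro y ⟨hyC, hyf⟩
    obtain ⟨hy1, hy2⟩ := hCq hyC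
    have hyfx : f y ≤ f x := hyf
    have hey := hfapp y
    refine ⟨⟨hy1, ?_⟩, ⟨hy2, ?_⟩⟩
    · rw [le_div_iff₀ h1]; nlinarith [mul_nonneg h2.le hy2]
    · rw [le_div_iff₀ h2]; nlinarith [mul_nonneg h1.le hy1]
  have hKcomp : IsCompact K := Metric.isCompact_of_isClosed_isBounded hKc hKb
  have hKne : K.Nonempty := ⟨x, hx, le_refl (f x)⟩
  obtain ⟨y₀, hy₀K, hy₀min⟩ := hKcomp.exists_isMinOn hKne f.continuous.continuousOn
  have hglob : ∀ z ∈ C, f y₀ ≤ f z := by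
    intro z hz
    by_cases hzK : f z ≤ f x
    · exact hy₀min ⟨hz, hzK⟩
    · push_neg at hzK
      have : f y₀ ≤ f x := hy₀K.2
      linarith
  set B := C ∩ {y : ℝ × ℝ | f y ≤ f y₀} with hB
  have hBexp : IsExposed ℝ C B := by
    intro _
    refine ⟨-f, ?_⟩
    ext y
    constructor
    · rintro ⟨hyC, hyf⟩
      have hyf' : f y ≤ f y₀ := hyf
      exact ⟨hyC, fun z hz => by
        simp only [ContinuousLinearMap.neg_apply, neg_le_neg_iff]
        linarith [hglob z hz]⟩
    · rintro ⟨hyC, hall⟩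
      have := hall y₀ hy₀K.1
      simp only [ContinuousLinearMap.neg_apply, neg_le_neg_iff] at this
      exact ⟨hyC, this⟩
  have hBK : B ⊆ K := fun y hy => ⟨hy.1, show f y ≤ f x from le_trans (hy.2 : f y ≤ f y₀) hy₀K.2⟩
  have hBcomp : IsCompact B :=
    hKcomp.of_isClosed_subset (hCc.inter (isClosed_le f.continuous continuous_const)) hBK
  obtain ⟨z, hz⟩ := hBcomp.extremePoints_nonempty ⟨y₀, hy₀K.1, le_refl (f y₀)⟩
  refine ⟨z, hBexp.isExtreme.extremePoints_subset_extremePoints hz, ?_⟩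
  have hzB : z ∈ B := extremePoints_subset hz
  have h3 : f z ≤ f x := le_trans hzB.2 hy₀K.2
  rw [hfapp z, hfapp x] at h3
  exact h3

def LatticePts : Set (ℝ × ℝ) := {p : ℝ × ℝ | ∃ a b : ℕ, p = ((a : ℝ), (b : ℝ))}

lemma latt_nonempty {C : Set (ℝ × ℝ)} (hCq : C ⊆ Quad) (hCc : IsClosed C)
    (hext : Set.extremePoints ℝ C ⊆ LatticePts) (hne : C.Nonempty) :
    (latt C).Nonempty := by
  obtain ⟨x, hx⟩ := hne
  obtain ⟨z, hz, -⟩ := extreme_min hCq hCc hx one_pos one_pos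
  obtain ⟨a, b, rfl⟩ := hext hz
  refine ⟨(a, b), ?_⟩
  show emb (a, b) ∈ C
  have : emb (a, b) = ((a:ℝ), (b:ℝ)) := rfl
  rw [this]
  exact extremePoints_subset hz

lemma conv_eq_gam {C : Set (ℝ × ℝ)} (hCq : C ⊆ Quad) (hCc : IsClosed C) (hCv : Convex ℝ C)
    (hCQ : C + Quad = C) (hext : Set.extremePoints ℝ C ⊆ LatticePts) (hne : C.Nonempty) :
    C = gam (latt C) := by
  have hlu : IsUpperSet (latt C) := latt_upper hCQ
  have hln : (latt C).Nonempty := latt_nonempty hCq hCc hext hne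
  have hDC : gam (latt C) ⊆ C := by
    apply closure_minimal _ hCc
    apply convexHull_min _ hCv
    rintro w ⟨a, ⟨p, hp, rfl⟩, t, ht, rfl⟩
    rw [← hCQ]
    exact ⟨emb p, hp, t, ht, rfl⟩
  apply Subset.antisymm _ hDC
  intro x hx
  by_contra hxD
  obtain ⟨f, β, hfx, hfD⟩ := geometric_hahn_banach_point_closed
    ((convex_convexHull ℝ _).closure) isClosed_closure hxD
  have hDQ : gam (latt C) + Quad = gam (latt C) := gam_add_quad hlu hln
  obtain ⟨p₀, hp₀⟩ := hln
  have hd₀ : emb p₀ ∈ gam (latt C) := subset_gam hp₀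
  have hu1 : 0 ≤ f (1, 0) := by
    by_contra h
    push_neg at h
    have hb : β < f (emb p₀) := hfD _ hd₀
    set t := (β - f (emb p₀)) / f (1, 0) + 1 with ht
    have htpos : 0 < t := by
      have h9 : 0 < (β - f (emb p₀)) / f (1, 0) := div_pos_of_neg_of_neg (by linarith) h
      rw [ht]; linarith
    have hsm : t • ((1:ℝ), (0:ℝ)) = (t, 0) := by simp
    have hmem : emb p₀ + t • ((1:ℝ), (0:ℝ)) ∈ gam (latt C) := by
      rw [← hDQ]
      exact ⟨emb p₀, hd₀, t • ((1:ℝ), (0:ℝ)), by rw [hsm]; exact ⟨htpos.le, le_refl 0⟩, rfl⟩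
    have hcontr := hfD _ hmem
    rw [map_add, map_smul, smul_eq_mul] at hcontr
    have hmul : t * f (1, 0) < ((β - f (emb p₀)) / f (1, 0)) * f (1, 0) :=
      mul_lt_mul_of_neg_right (by linarith) h
    rw [div_mul_cancel₀ _ h.ne] at hmul
    linarith
  have hu2 : 0 ≤ f (0, 1) := by
    by_contra h
    push_neg at h
    have hb : β < f (emb p₀) := hfD _ hd₀
    set t := (β - f (emb p₀)) / f (0, 1) + 1 with ht
    have htpos : 0 < t := by
      have h9 : 0 < (β - f (emb p₀)) / f (0, 1) := div_pos_of_neg_of_neg (by linarith) h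
      rw [ht]; linarith
    have hsm : t • ((0:ℝ), (1:ℝ)) = (0, t) := by simp
    have hmem : emb p₀ + t • ((0:ℝ), (1:ℝ)) ∈ gam (latt C) := by
      rw [← hDQ]
      exact ⟨emb p₀, hd₀, t • ((0:ℝ), (1:ℝ)), by rw [hsm]; exact ⟨le_refl 0, htpos.le⟩, rfl⟩
    have hcontr := hfD _ hmem
    rw [map_add, map_smul, smul_eq_mul] at hcontr
    have hmul : t * f (0, 1) < ((β - f (emb p₀)) / f (0, 1)) * f (0, 1) :=
      mul_lt_mul_of_neg_right (by linarith) h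
    rw [div_mul_cancel₀ _ h.ne] at hmul
    linarith
  have hfy : ∀ y : ℝ × ℝ, f y = y.1 * f (1, 0) + y.2 * f (0, 1) := by
    intro y
    have hy : y = y.1 • ((1:ℝ), (0:ℝ)) + y.2 • ((0:ℝ), (1:ℝ)) := by
      ext <;> simp
    calc f y = f (y.1 • ((1:ℝ), (0:ℝ)) + y.2 • ((0:ℝ), (1:ℝ))) := by rw [← hy]
    _ = y.1 * f (1, 0) + y.2 * f (0, 1) := by
        rw [map_add, map_smul, map_smul, smul_eq_mul, smul_eq_mul]
  have hxq := hCq hx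
  have hpos : (0:ℝ) < x.1 + x.2 + 1 := by linarith [hxq.1, hxq.2]
  set δ := (β - f x) / (x.1 + x.2 + 1) with hδ
  have hδpos : 0 < δ := div_pos (by linarith) hpos
  obtain ⟨z, hzext, hzle⟩ := extreme_min hCq hCc hx
    (show 0 < f (1, 0) + δ by linarith) (show 0 < f (0, 1) + δ by linarith)
  obtain ⟨a, b, hzab⟩ := hext hzext
  have hzC : z ∈ C := extremePoints_subset hzext
  have hzD : z ∈ gam (latt C) := by
    rw [hzab]
    exact subset_gam (show ((a : ℕ), (b : ℕ)) ∈ latt C from by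
      show emb (a, b) ∈ C
      show ((a:ℝ), (b:ℝ)) ∈ C
      rw [← hzab]; exact hzC)
  have hβz : β < f z := hfD z hzD
  have hzq := hCq hzC
  have hδx : δ * (x.1 + x.2) < β - f x := by
    have hfrac : (x.1 + x.2) / (x.1 + x.2 + 1) < 1 := (div_lt_one hpos).2 (by linarith)
    calc δ * (x.1 + x.2) = (β - f x) * ((x.1 + x.2) / (x.1 + x.2 + 1)) := by rw [hδ]; ring
    _ < (β - f x) * 1 := mul_lt_mul_of_pos_left hfrac (by linarith)
    _ = β - f x := mul_one _
  have hfz := hfy z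
  have hfx' := hfy x
  have hq1 := hzq.1
  have hq2 := hzq.2
  nlinarith [hzle, mul_nonneg hδpos.le hq1, mul_nonneg hδpos.le hq2, hβz, hδx, hfz, hfx']


lemma latt_quad : latt Quad = Set.univ :=
  eq_univ_of_forall fun _ => ⟨Nat.cast_nonneg _, Nat.cast_nonneg _⟩

end Stmt14Aux

open Stmt14Aux

theorem stmt14 {R : Type*} [CommSemiring R]
    (hcanc : ∀ x y z : R, x ≠ 0 → x * y = x * z → y = z)
    (ρ : Set (ℕ × ℕ) → R)
    (hadd : ∀ E E' : Set (ℕ × ℕ), IsUpperSet E → IsUpperSet E' →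
      ρ (E ∪ E') = ρ E + ρ E' ∧ ρ (E + E') = ρ E * ρ E')
    (h0 : ρ ∅ = 0) (h1 : ρ Set.univ = 1)
    (hker : ∀ E : Set (ℕ × ℕ), IsUpperSet E → (ρ E = 0 ↔ E = ∅)) :
    (∀ E E' : Set (ℕ × ℕ), IsUpperSet E → IsUpperSet E' → gam E = gam E' → ρ E = ρ E') ∧
    ∃ ρ' : Set (ℝ × ℝ) → R, IsConvHom ρ' ∧
      (∀ E : Set (ℕ × ℕ), IsUpperSet E → ρ' (gam E) = ρ E) ∧
      ∀ σ : Set (ℝ × ℝ) → R, IsConvHom σ →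
        (∀ E : Set (ℕ × ℕ), IsUpperSet E → σ (gam E) = ρ E) →
        ∀ C : Set (ℝ × ℝ), IsConvGE C → σ C = ρ' C := by
  classical
  have Hsat : ∀ E : Set (ℕ × ℕ), IsUpperSet E → E.Nonempty → ρ (latt (gam E)) = ρ E := by
    intro E hE hne
    have hlu : IsUpperSet (latt (gam E)) := latt_upper (gam_add_quad hE hne)
    have hsub : E ⊆ latt (gam E) := subset_latt_gam
    have hln : (latt (gam E)).Nonempty := hne.mono hsub
    have heq : E + latt (gam E) = latt (gam E) + latt (gam E) :=
      Subset.antisymm (Set.add_subset_add_right hsub) (sat_add_sat hE hne)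
    have hne0 : ρ (latt (gam E)) ≠ 0 := by
      intro h
      have h2 := (hker _ hlu).1 h
      rw [h2] at hln
      exact Set.not_nonempty_empty hln
    refine hcanc _ _ _ hne0 ?_
    calc ρ (latt (gam E)) * ρ (latt (gam E)) = ρ (latt (gam E) + latt (gam E)) :=
          ((hadd _ _ hlu hlu).2).symm
    _ = ρ (E + latt (gam E)) := by rw [heq]
    _ = ρ E * ρ (latt (gam E)) := (hadd _ _ hE hlu).2
    _ = ρ (latt (gam E)) * ρ E := mul_comm _ _
  have Hemp : ∀ E : Set (ℕ × ℕ), gam E = ∅ → E = ∅ := by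
    intro E hg
    rw [← Set.subset_empty_iff]
    intro e he
    have h2 := subset_gam he
    rw [hg] at h2
    exact absurd h2 (Set.notMem_empty _)
  have part1 : ∀ E E' : Set (ℕ × ℕ), IsUpperSet E → IsUpperSet E' →
      gam E = gam E' → ρ E = ρ E' := by
    intro E E' hE hE' hg
    rcases E.eq_empty_or_nonempty with rfl | hne
    · have h2 : E' = ∅ := Hemp E' (by rw [← hg, gam_empty])
      rw [h2]
    · have hne' : E'.Nonempty := by
        rcases E'.eq_empty_or_nonempty with rfl | h
        · exact absurd (Hemp E (by rw [hg, gam_empty])) hne.ne_empty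
        · exact h
      rw [← Hsat E hE hne, ← Hsat E' hE' hne', hg]
  refine ⟨part1, fun C => ρ (latt C), ⟨?_, ?_, ?_⟩, ?_, ?_⟩
  · show ρ (latt ∅) = 0
    rw [latt_empty]; exact h0
  · show ρ (latt Quad) = 1
    rw [latt_quad]; exact h1
  · intro C C' hC hC'
    rcases eq_or_ne C ∅ with rfl | hCne
    · constructor
      · show ρ (latt (closure (convexHull ℝ (∅ ∪ C')))) = ρ (latt ∅) + ρ (latt C')
        rcases eq_or_ne C' ∅ with rfl | hC'ne
        · rw [Set.empty_union, convexHull_empty, closure_empty, latt_empty, h0]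
          norm_num
        · rcases hC' with h | ⟨hq', hc', hv', hQ', he'⟩
          · exact absurd h hC'ne
          rw [Set.empty_union, hv'.convexHull_eq, hc'.closure_eq, latt_empty, h0, zero_add]
      · show ρ (latt (∅ + C')) = ρ (latt ∅) * ρ (latt C')
        rw [Set.empty_add, latt_empty, h0, zero_mul]
    rcases eq_or_ne C' ∅ with rfl | hC'ne
    · constructor
      · show ρ (latt (closure (convexHull ℝ (C ∪ ∅)))) = ρ (latt C) + ρ (latt ∅)
        rcases hC with h | ⟨hq, hc, hv, hQ, he⟩
        · exact absurd h hCne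
        rw [Set.union_empty, hv.convexHull_eq, hc.closure_eq, latt_empty, h0, add_zero]
      · show ρ (latt (C + ∅)) = ρ (latt C) * ρ (latt ∅)
        rw [Set.add_empty, latt_empty, h0, mul_zero]
    -- both nonempty
    rcases hC with h | ⟨hq, hc, hv, hQ, he⟩
    · exact absurd h hCne
    rcases hC' with h | ⟨hq', hc', hv', hQ', he'⟩
    · exact absurd h hC'ne
    have hg : C = gam (latt C) := conv_eq_gam hq hc hv hQ he (nonempty_iff_ne_empty.2 hCne)
    have hg' : C' = gam (latt C') := conv_eq_gam hq' hc' hv' hQ' he' (nonempty_iff_ne_empty.2 hC'ne)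
    have hlu : IsUpperSet (latt C) := latt_upper hQ
    have hlu' : IsUpperSet (latt C') := latt_upper hQ'
    have hln : (latt C).Nonempty := latt_nonempty hq hc he (nonempty_iff_ne_empty.2 hCne)
    have hln' : (latt C').Nonempty := latt_nonempty hq' hc' he' (nonempty_iff_ne_empty.2 hC'ne)
    constructor
    · show ρ (latt (closure (convexHull ℝ (C ∪ C')))) = ρ (latt C) + ρ (latt C')
      rw [hg, hg', gam_union, Hsat _ (hlu.union hlu') (hln.mono subset_union_left),
        Hsat _ hlu hln, Hsat _ hlu' hln']
      exact (hadd _ _ hlu hlu').1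
    · show ρ (latt (C + C')) = ρ (latt C) * ρ (latt C')
      have hlnsum : (latt C + latt C').Nonempty := by
        obtain ⟨u, hu⟩ := hln
        obtain ⟨u', hu'⟩ := hln'
        exact ⟨u + u', u, hu, u', hu', rfl⟩
      rw [hg, hg', ← gam_add hlu hlu' hln hln',
        Hsat _ (upper_add hlu hlu') hlnsum, (hadd _ _ hlu hlu').2,
        Hsat _ hlu hln, Hsat _ hlu' hln']
  · intro E hE
    show ρ (latt (gam E)) = ρ E
    rcases E.eq_empty_or_nonempty with rfl | hne
    · rw [gam_empty, latt_empty]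
    · exact Hsat E hE hne
  · intro σ hσ hσg C hC
    rcases eq_or_ne C ∅ with rfl | hCne
    · show σ ∅ = ρ (latt ∅)
      rw [hσ.1, latt_empty, h0]
    · rcases hC with h | ⟨hq, hc, hv, hQ, he⟩
      · exact absurd h hCne
      have hg : C = gam (latt C) := conv_eq_gam hq hc hv hQ he (nonempty_iff_ne_empty.2 hCne)
      show σ C = ρ (latt C)
      conv_lhs => rw [hg]
      exact hσg _ (latt_upper hQ)
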